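/- Let (λ_k)_{k∈ℕ} be a sequence of real numbers with λ_k ∈ (0,1] for every k. Define s : [0,1] → ℝ by s(λ) = −λ log λ − (1−λ) log(1−λ) for λ ∈ (0,1) and s(0) = s(1) = 0. Assume A := Σ_{k} λ_k(1−λ_k) satisfies 0 < A < ∞ and B := Σ_{k} √(λ_k(1−λ_k)) < ∞. Then the series Σ_k s(λ_k) converges and A ≤ Σ_k s(λ_k) ≤ 4 A log(B/A). -/

import Mathlib

noncomputable section

/-- The binary entropy function `s(λ) = −λ log λ − (1−λ) log(1−λ)`; with Lean's convention
`Real.log 0 = 0` this agrees with the continuous extension `s(0) = s(1) = 0`. -/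
def binEnt (x : ℝ) : ℝ := -x * Real.log x - (1 - x) * Real.log (1 - x)

private lemma concaveK : ConcaveOn ℝ (Set.Icc (0:ℝ) 1)
    (fun v => (1+v) * Real.log (1+v) - (1-v) * Real.log (1-v)) := by
  have hint : interior (Set.Icc (0:ℝ) 1) = Set.Ioo 0 1 := interior_Icc
  apply concaveOn_of_hasDerivWithinAt2_nonpos (f' := fun v => Real.log (1+v) + Real.log (1-v) + 2)
    (f'' := fun v => 1/(1+v) - 1/(1-v)) (convex_Icc 0 1)
  · exact ((Real.continuous_mul_log.comp (continuous_const.add continuous_id)).sub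
      (Real.continuous_mul_log.comp (continuous_const.sub continuous_id))).continuousOn
  · intro x hx
    rw [hint] at hx
    obtain ⟨hx0, hx1⟩ := hx
    have h1 : (1:ℝ) + x ≠ 0 := by linarith
    have h2 : (1:ℝ) - x ≠ 0 := by linarith
    have d1 : HasDerivAt (fun v : ℝ => (1+v) * Real.log (1+v)) ((Real.log (1+x) + 1) * 1) x :=
      (Real.hasDerivAt_mul_log h1).comp x ((hasDerivAt_id x).const_add 1)
    have d2 : HasDerivAt (fun v : ℝ => (1-v) * Real.log (1-v)) ((Real.log (1-x) + 1) * (-1)) x :=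
      (Real.hasDerivAt_mul_log h2).comp x ((hasDerivAt_id x).neg.const_add 1)
    have := (d1.sub d2)
    have heq : (Real.log (1+x) + 1) * 1 - (Real.log (1-x) + 1) * (-1)
        = Real.log (1+x) + Real.log (1-x) + 2 := by ring
    rw [heq] at this
    exact this.hasDerivWithinAt
  · intro x hx
    rw [hint] at hx
    obtain ⟨hx0, hx1⟩ := hx
    have h1 : (1:ℝ) + x ≠ 0 := by linarith
    have h2 : (1:ℝ) - x ≠ 0 := by linarith
    have d1 : HasDerivAt (fun v : ℝ => Real.log (1+v)) ((1+x)⁻¹ * 1) x :=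
      (Real.hasDerivAt_log h1).comp x ((hasDerivAt_id x).const_add 1)
    have d2 : HasDerivAt (fun v : ℝ => Real.log (1-v)) ((1-x)⁻¹ * (-1)) x :=
      (Real.hasDerivAt_log h2).comp x ((hasDerivAt_id x).neg.const_add 1)
    have := (d1.add d2).add_const 2
    have heq : (1+x)⁻¹ * 1 + (1-x)⁻¹ * (-1) = 1/(1+x) - 1/(1-x) := by ring
    rw [heq] at this
    exact this.hasDerivWithinAt
  · intro x hx
    rw [hint] at hx
    obtain ⟨hx0, hx1⟩ := hx
    have h1 : (0:ℝ) < 1 + x := by linarith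
    have h2 : (0:ℝ) < 1 - x := by linarith
    have : 1/(1+x) ≤ 1/(1-x) := by
      apply div_le_div_of_nonneg_left (by norm_num) h2 (by linarith)
    linarith

/-- Core inequality: if `0 < b ≤ a` and `a + b = 1` then `b log b ≤ a log a`. -/
private lemma core_mul_log (a b : ℝ) (hb : 0 < b) (hba : b ≤ a) (hab : a + b = 1) :
    b * Real.log b ≤ a * Real.log a := by
  set K : ℝ → ℝ := fun v => (1+v) * Real.log (1+v) - (1-v) * Real.log (1-v) with hK
  have ha : 0 < a := lt_of_lt_of_le hb hba
  set v : ℝ := a - b with hv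
  have hv0 : 0 ≤ v := by linarith
  have hv1 : v ≤ 1 := by linarith
  have h01 : (0:ℝ) ∈ Set.Icc (0:ℝ) 1 := by norm_num
  have h11 : (1:ℝ) ∈ Set.Icc (0:ℝ) 1 := by norm_num
  have hchord := concaveK.2 h01 h11 (by linarith : (0:ℝ) ≤ 1 - v) hv0 (by ring)
  have hKv : (1 - v) • K 0 + v • K 1 ≤ K ((1-v) • (0:ℝ) + v • 1) := hchord
  have hK0 : K 0 = 0 := by simp [hK]
  have hK1 : K 1 = 2 * Real.log 2 := by
    simp [hK]
    ring
  have harg : (1-v) • (0:ℝ) + v • (1:ℝ) = v := by simp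
  rw [hK0, harg, hK1] at hKv
  have hKv' : v * (2 * Real.log 2) ≤ K v := by simpa using hKv
  have h1v : 1 + v = 2 * a := by linarith
  have h2v : 1 - v = 2 * b := by linarith
  have hl1 : Real.log (1 + v) = Real.log 2 + Real.log a := by
    rw [h1v, Real.log_mul (by norm_num) (ne_of_gt ha)]
  have hl2 : Real.log (1 - v) = Real.log 2 + Real.log b := by
    rw [h2v, Real.log_mul (by norm_num) (ne_of_gt hb)]
  have hKval : K v = (2*a) * (Real.log 2 + Real.log a) - (2*b) * (Real.log 2 + Real.log b) := by
    simp only [hK]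
    rw [hl1, hl2, h1v, h2v]
  rw [hKval] at hKv'
  have hKv2 : (a - b) * (2 * Real.log 2)
      ≤ 2 * a * (Real.log 2 + Real.log a) - 2 * b * (Real.log 2 + Real.log b) := by
    rw [← hv]; exact hKv'
  ring_nf at hKv2 ⊢
  linarith [hKv2]

/-- Lower pointwise bound: `x(1-x) ≤ binEnt x` for `x ∈ (0,1]`. -/
private lemma binEnt_lower {x : ℝ} (hx : x ∈ Set.Ioc (0:ℝ) 1) : x * (1 - x) ≤ binEnt x := by
  obtain ⟨hx0, hx1⟩ := hx
  rcases eq_or_lt_of_le hx1 with h1 | h1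
  · subst h1; simp [binEnt]
  · have l1 : Real.log x ≤ x - 1 := Real.log_le_sub_one_of_pos hx0
    have l2 : Real.log (1 - x) ≤ (1 - x) - 1 := Real.log_le_sub_one_of_pos (by linarith)
    unfold binEnt
    nlinarith [l1, l2, hx0.le, sub_nonneg.mpr h1.le]

/-- Upper pointwise bound: `binEnt x ≤ -2 x(1-x) log (x(1-x))` for `x ∈ (0,1]`. -/
private lemma binEnt_upper {x : ℝ} (hx : x ∈ Set.Ioc (0:ℝ) 1) :
    binEnt x ≤ -2 * (x * (1 - x)) * Real.log (x * (1 - x)) := by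
  obtain ⟨hx0, hx1⟩ := hx
  rcases eq_or_lt_of_le hx1 with h1 | h1
  · subst h1; simp [binEnt]
  · have hb0 : 0 < 1 - x := by linarith
    rw [Real.log_mul (ne_of_gt hx0) (ne_of_gt hb0)]
    have key : 0 ≤ (x - (1 - x)) * (x * Real.log x - (1 - x) * Real.log (1 - x)) := by
      rcases le_total (1 - x) x with hc | hc
      · have := core_mul_log x (1 - x) hb0 hc (by ring)
        nlinarith [this]
      · have := core_mul_log (1 - x) x hx0 hc (by ring)
        nlinarith [this]
    unfold binEnt
    nlinarith [key]

theorem statement_10 (lam : ℕ → ℝ) (hlam : ∀ k, lam k ∈ Set.Ioc (0:ℝ) 1)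
    (hA : Summable fun k => lam k * (1 - lam k))
    (hApos : 0 < ∑' k, lam k * (1 - lam k))
    (hB : Summable fun k => Real.sqrt (lam k * (1 - lam k))) :
    (Summable fun k => binEnt (lam k)) ∧
    (∑' k, lam k * (1 - lam k)) ≤ (∑' k, binEnt (lam k)) ∧
    (∑' k, binEnt (lam k)) ≤
      4 * (∑' k, lam k * (1 - lam k)) *
        Real.log ((∑' k, Real.sqrt (lam k * (1 - lam k))) / (∑' k, lam k * (1 - lam k))) := by
  set T : ℕ → ℝ := fun k => lam k * (1 - lam k) with hT
  set A : ℝ := ∑' k, T k with hAdef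
  set B : ℝ := ∑' k, Real.sqrt (T k) with hBdef
  have ht0 : ∀ k, 0 ≤ T k := fun k => by
    obtain ⟨h0, h1⟩ := hlam k
    have : 0 ≤ 1 - lam k := by linarith
    positivity
  have ht1 : ∀ k, T k ≤ 1 := fun k => by
    obtain ⟨h0, h1⟩ := hlam k
    simp only [hT]
    nlinarith
  have hsq : ∀ k, T k ≤ Real.sqrt (T k) := fun k => by
    have h2 : T k * T k ≤ T k := by nlinarith [ht0 k, ht1 k]
    calc T k = Real.sqrt (T k * T k) := (Real.sqrt_mul_self (ht0 k)).symm
    _ ≤ Real.sqrt (T k) := Real.sqrt_le_sqrt h2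
  have hAB : A ≤ B := Summable.tsum_le_tsum hsq hA hB
  have hBpos : 0 < B := lt_of_lt_of_le hApos hAB
  have hBA1 : 0 < B / A := div_pos hBpos hApos
  -- pointwise upper bound
  set u : ℕ → ℝ := fun k => 4 * Real.log (B/A) * T k + (4 * (A/B) * Real.sqrt (T k) - 4 * T k)
    with hu_def
  have key : ∀ k, binEnt (lam k) ≤ u k := by
    intro k
    have h1 := binEnt_upper (hlam k)
    rcases eq_or_lt_of_le (ht0 k) with h0 | h0
    · have hT0 : T k = 0 := h0.symm
      have hu0 : u k = 0 := by simp [hu_def, hT0]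
      rw [hu0]
      have h1' : binEnt (lam k) ≤ -2 * T k * Real.log (T k) := h1
      rw [hT0] at h1'
      simpa using h1'
    · have hsT : 0 < Real.sqrt (T k) := Real.sqrt_pos.mpr h0
      have hlogT : Real.log (T k) = 2 * Real.log (Real.sqrt (T k)) := by
        rw [Real.log_sqrt (ht0 k)]; ring
      have hsplit : Real.log (A / (B * Real.sqrt (T k))) + Real.log (B / A)
          = - Real.log (Real.sqrt (T k)) := by
        rw [Real.log_div (ne_of_gt hApos) (ne_of_gt (mul_pos hBpos hsT)),
          Real.log_mul (ne_of_gt hBpos) (ne_of_gt hsT),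
          Real.log_div (ne_of_gt hBpos) (ne_of_gt hApos)]
        ring
      have hlog_le : Real.log (A / (B * Real.sqrt (T k))) ≤ A / (B * Real.sqrt (T k)) - 1 :=
        Real.log_le_sub_one_of_pos (div_pos hApos (mul_pos hBpos hsT))
      have hTs : T k / Real.sqrt (T k) = Real.sqrt (T k) := by
        rw [eq_comm, eq_div_iff (ne_of_gt hsT), Real.mul_self_sqrt (ht0 k)]
      have e1 : -2 * T k * Real.log (T k)
          = 4 * T k * Real.log (A / (B * Real.sqrt (T k))) + 4 * Real.log (B/A) * T k := by
        have : Real.log (A / (B * Real.sqrt (T k)))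
            = - Real.log (Real.sqrt (T k)) - Real.log (B / A) := by linarith [hsplit]
        rw [this, hlogT]; ring
      have e2 : 4 * T k * Real.log (A / (B * Real.sqrt (T k)))
          ≤ 4 * (A/B) * Real.sqrt (T k) - 4 * T k := by
        have h4T : 0 ≤ 4 * T k := by linarith [ht0 k]
        have := mul_le_mul_of_nonneg_left hlog_le h4T
        have e3 : 4 * T k * (A / (B * Real.sqrt (T k)) - 1)
            = 4 * (A/B) * Real.sqrt (T k) - 4 * T k := by
          set s := Real.sqrt (T k) with hsdef
          have hsne : s ≠ 0 := ne_of_gt hsT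
          have hBne : B ≠ 0 := ne_of_gt hBpos
          have hs2 : T k = s * s := (Real.mul_self_sqrt (ht0 k)).symm
          rw [hs2]
          field_simp
        linarith [this, e3.le, e3.ge]
      calc binEnt (lam k) ≤ -2 * T k * Real.log (T k) := h1
      _ = 4 * T k * Real.log (A / (B * Real.sqrt (T k))) + 4 * Real.log (B/A) * T k := e1
      _ ≤ (4 * (A/B) * Real.sqrt (T k) - 4 * T k) + 4 * Real.log (B/A) * T k := by
          linarith [e2]
      _ = u k := by simp only [hu_def]; ring
  have hu : Summable u := by
    apply Summable.add (hA.mul_left _)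
    exact (hB.mul_left _).sub (hA.mul_left 4)
  have hbe_nonneg : ∀ k, 0 ≤ binEnt (lam k) := fun k =>
    le_trans (ht0 k) (binEnt_lower (hlam k))
  have hS : Summable fun k => binEnt (lam k) :=
    Summable.of_nonneg_of_le hbe_nonneg key hu
  refine ⟨hS, ?_, ?_⟩
  · exact Summable.tsum_le_tsum (fun k => binEnt_lower (hlam k)) hA hS
  · have h1 : (∑' k, binEnt (lam k)) ≤ ∑' k, u k := Summable.tsum_le_tsum key hS hu
    have h2 : ∑' k, u k = 4 * Real.log (B/A) * A + (4 * (A/B) * B - 4 * A) := by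
      rw [hu_def, Summable.tsum_add (hA.mul_left _) ((hB.mul_left _).sub (hA.mul_left 4)),
        Summable.tsum_sub (hB.mul_left _) (hA.mul_left 4), tsum_mul_left, tsum_mul_left, tsum_mul_left]
    have h3 : 4 * (A/B) * B - 4 * A = 0 := by
      field_simp
      ring
    rw [h2, h3] at h1
    calc (∑' k, binEnt (lam k)) ≤ 4 * Real.log (B/A) * A + 0 := h1
    _ = 4 * A * Real.log (B / A) := by ring
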